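/- Let u and v be vertices of a digraph G that are not vertex-resilient but are connected by a path P in the block graph F. Then for every vertex w ∈ V \ {u,v} lying on P, u and v are not strongly connected in G \ w. -/

import Mathlib

variable {V : Type*}

/-- Mutual reachability (strong connectivity of a pair) in the digraph `E`. -/
def SConn (E : V → V → Prop) (u v : V) : Prop :=
  Relation.ReflTransGen E u v ∧ Relation.ReflTransGen E v u

/-- The digraph obtained from `E` by deleting vertex `w` (and incident edges). -/
def delV (E : V → V → Prop) (w : V) : V → V → Prop :=
  fun a b => E a b ∧ a ≠ w ∧ b ≠ w

/-- The digraph obtained from `E` by deleting the single edge `(a,b)`. -/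
def delE (E : V → V → Prop) (a b : V) : V → V → Prop :=
  fun x y => E x y ∧ ¬(x = a ∧ y = b)

/-- `u` and `v` are vertex-resilient: they are distinct and remain strongly
connected after deletion of any single other vertex. -/
def VRes (E : V → V → Prop) (u v : V) : Prop :=
  u ≠ v ∧ ∀ w, w ≠ u → w ≠ v → SConn (delV E w) u v

/-- A vertex-resilient block: a maximal set of size ≥ 2 of pairwise
vertex-resilient vertices. -/
def IsVRBlock (E : V → V → Prop) (B : Set V) : Prop :=
  B.Pairwise (VRes E) ∧ (∃ a ∈ B, ∃ b ∈ B, a ≠ b) ∧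
    ∀ B' : Set V, B ⊆ B' → B'.Pairwise (VRes E) → B' = B

/-- `l` is (the vertex list of) a directed path from `u` to `v` in `E`. -/
def IsPathList (E : V → V → Prop) (u v : V) (l : List V) : Prop :=
  l.Chain' E ∧ l.head? = some u ∧ l.getLast? = some v

/-- The internal vertices of a path given as a vertex list. -/
def internalsL (l : List V) : List V := (l.drop 1).dropLast

/-- The edges of a path given as a vertex list. -/
def edgesOfL (l : List V) : List (V × V) := l.zip l.tail

/-- There exist two internally vertex-disjoint (simple, distinct) paths from `u` to `v`. -/
def TwoVPaths (E : V → V → Prop) (u v : V) : Prop :=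
  ∃ l₁ l₂ : List V, IsPathList E u v l₁ ∧ IsPathList E u v l₂ ∧
    l₁.Nodup ∧ l₂.Nodup ∧ l₁ ≠ l₂ ∧ ∀ x ∈ internalsL l₁, x ∉ internalsL l₂

/-- `u` and `v` are 2-vertex-connected. -/
def TwoVConn (E : V → V → Prop) (u v : V) : Prop :=
  u ≠ v ∧ TwoVPaths E u v ∧ TwoVPaths E v u

/-- There exist two edge-disjoint paths from `u` to `v`. -/
def TwoEPaths (E : V → V → Prop) (u v : V) : Prop :=
  ∃ l₁ l₂ : List V, IsPathList E u v l₁ ∧ IsPathList E u v l₂ ∧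
    ∀ e ∈ edgesOfL l₁, e ∉ edgesOfL l₂

/-- `u` and `v` are 2-edge-connected. -/
def TwoEConn (E : V → V → Prop) (u v : V) : Prop :=
  u ≠ v ∧ TwoEPaths E u v ∧ TwoEPaths E v u

/-- A 2-vertex-connected block. -/
def Is2VBlock (E : V → V → Prop) (B : Set V) : Prop :=
  B.Pairwise (TwoVConn E) ∧ (∃ a ∈ B, ∃ b ∈ B, a ≠ b) ∧
    ∀ B' : Set V, B ⊆ B' → B'.Pairwise (TwoVConn E) → B' = B

/-- A 2-edge-connected block. -/
def Is2EBlock (E : V → V → Prop) (B : Set V) : Prop :=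
  B.Pairwise (TwoEConn E) ∧ (∃ a ∈ B, ∃ b ∈ B, a ≠ b) ∧
    ∀ B' : Set V, B ⊆ B' → B'.Pairwise (TwoEConn E) → B' = B

/-- The digraph `E` is strongly connected. -/
def StronglyConn (E : V → V → Prop) : Prop :=
  ∀ u v, Relation.ReflTransGen E u v

/-- `(a,b)` is a strong bridge of the strongly connected digraph `E`. -/
def IsStrongBridge (E : V → V → Prop) (a b : V) : Prop :=
  E a b ∧ ¬ StronglyConn (delE E a b)

/-- `u` dominates `w` in the flow graph with start vertex `s`:
every path from `s` to `w` contains `u`. -/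
def DomOf (E : V → V → Prop) (s u w : V) : Prop :=
  ∀ l : List V, IsPathList E s w l → u ∈ l

/-- `d` is the immediate dominator of `w` in the flow graph with start `s`:
the proper dominator of `w` dominated by all proper dominators of `w`. -/
def IdomOf (E : V → V → Prop) (s d w : V) : Prop :=
  d ≠ w ∧ DomOf E s d w ∧ ∀ u, u ≠ w → DomOf E s u w → DomOf E s u d

/-- The block graph `F` of the digraph `E`: the bipartite undirected graph on the
vertices of `E` together with its vertex-resilient blocks, a vertex `u` being
adjacent to a block node `B` exactly when `u ∈ B`. -/
def blockGraph (E : V → V → Prop) :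
    SimpleGraph (V ⊕ {B : Set V // IsVRBlock E B}) where
  Adj a b := ∃ u B, u ∈ B.1 ∧
    ((a = Sum.inl u ∧ b = Sum.inr B) ∨ (a = Sum.inr B ∧ b = Sum.inl u))
  symm := by
    refine ⟨?_⟩
    rintro a b ⟨u, B, hm, (⟨rfl, rfl⟩ | ⟨rfl, rfl⟩)⟩
    · exact ⟨u, B, hm, Or.inr ⟨rfl, rfl⟩⟩
    · exact ⟨u, B, hm, Or.inl ⟨rfl, rfl⟩⟩
  loopless := by
    refine ⟨?_⟩
    rintro a ⟨u, B, hm, (⟨rfl, h⟩ | ⟨rfl, h⟩)⟩ <;> simp at h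

lemma sconn_refl (E : V → V → Prop) (a : V) : SConn E a a :=
  ⟨Relation.ReflTransGen.refl, Relation.ReflTransGen.refl⟩

lemma sconn_symm {E : V → V → Prop} {a b : V} (h : SConn E a b) : SConn E b a :=
  ⟨h.2, h.1⟩

lemma sconn_trans {E : V → V → Prop} {a b c : V} (h1 : SConn E a b) (h2 : SConn E b c) :
    SConn E a c := ⟨h1.1.trans h2.1, h2.2.trans h1.2⟩

lemma bg_aux {E : V → V → Prop} {w : V} :
    ∀ {s t : V ⊕ {B : Set V // IsVRBlock E B}} (Q : (blockGraph E).Walk s t),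
      Sum.inl w ∉ Q.support → ∀ b : V, t = Sum.inl b →
      ((∀ a, s = Sum.inl a → SConn (delV E w) a b) ∧
       (∀ B, s = Sum.inr B → ∀ a ∈ B.1, a ≠ w → SConn (delV E w) a b)) := by
  intro s t Q
  induction Q with
  | nil =>
    intro _ b hb
    constructor
    · rintro a rfl
      obtain rfl : a = b := by injection hb
      exact sconn_refl _ _
    · rintro B rfl
      simp at hb
  | @cons s' v' t' e q ih =>
    intro hw b hb
    simp only [SimpleGraph.Walk.support_cons, List.mem_cons, not_or] at hw
    obtain ⟨hw1, hw2⟩ := hw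
    constructor
    · rintro a rfl
      obtain ⟨x, B, hxB, hc⟩ := e
      rcases hc with ⟨h1, h2⟩ | ⟨h1, h2⟩
      · obtain rfl : a = x := by injection h1
        subst h2
        refine (ih hw2 b hb).2 B rfl a hxB (fun haw => hw1 ?_)
        rw [haw]
      · simp at h1
    · rintro B rfl
      intro a haB haw
      obtain ⟨x, B', hxB', hc⟩ := e
      rcases hc with ⟨h1, h2⟩ | ⟨h1, h2⟩
      · simp at h1
      · obtain rfl : B = B' := by injection h1
        subst h2
        have hxw : x ≠ w := by
          intro hxw'
          exact hw2 (by rw [← hxw']; exact q.start_mem_support)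
        have hxb : SConn (delV E w) x b := (ih hw2 b hb).1 x rfl
        by_cases hax : a = x
        · subst hax; exact hxb
        · exact sconn_trans ((B.2.1 haB hxB' hax).2 w (Ne.symm haw) (Ne.symm hxw)) hxb

lemma bg_split {E : V → V → Prop} {w c : V}
    (Q : (blockGraph E).Walk (Sum.inl w) (Sum.inl c)) (hp : Q.IsPath) (hwc : w ≠ c) :
    ∃ B : {B : Set V // IsVRBlock E B}, w ∈ B.1 ∧ Sum.inr B ∈ Q.support.tail ∧
      ∀ a ∈ B.1, a ≠ w → SConn (delV E w) a c := by
  cases Q with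
  | nil => exact absurd rfl hwc
  | cons e q =>
    obtain ⟨x, B, hxB, hc⟩ := e
    rcases hc with ⟨h1, h2⟩ | ⟨h1, h2⟩
    · obtain rfl : w = x := by injection h1
      subst h2
      replace hp := (SimpleGraph.Walk.cons_isPath_iff _ _).1 hp
      refine ⟨B, hxB, ?_, ?_⟩
      · exact q.start_mem_support
      · intro a haB haw
        exact (bg_aux q hp.2 c rfl).2 B rfl a haB haw
    · simp at h1

/-- if `u` and `v` are not vertex-resilient but are connected by a path `P`
in the block graph, then every vertex `w ∈ V \ {u,v}` on `P` separates them: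
`u` and `v` are not strongly connected in `G \ w`. -/
theorem stmt6 (E : V → V → Prop) (u v : V) (hvr : ¬ VRes E u v)
    (P : (blockGraph E).Walk (Sum.inl u) (Sum.inl v)) (hP : P.IsPath)
    (w : V) (hwu : w ≠ u) (hwv : w ≠ v) (hw : Sum.inl w ∈ P.support) :
    ¬ SConn (delV E w) u v := by
  classical
  intro h
  have hP1 := hP.takeUntil hw
  have hP2 := hP.dropUntil hw
  obtain ⟨B1, hwB1, hmem1, hconn1⟩ :=
    bg_split (P.takeUntil (Sum.inl w) hw).reverse hP1.reverse hwu
  obtain ⟨B2, hwB2, hmem2, hconn2⟩ := bg_split (P.dropUntil (Sum.inl w) hw) hP2 hwv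
  have cross : ∀ a ∈ B1.1, ∀ b ∈ B2.1, a ≠ b → VRes E a b := by
    intro a ha b hb hab
    refine ⟨hab, fun z hza hzb => ?_⟩
    by_cases hzw : z = w
    · subst hzw
      exact sconn_trans (hconn1 a ha (fun h' => hza h'.symm))
        (sconn_trans h (sconn_symm (hconn2 b hb (fun h' => hzb h'.symm))))
    · have leg1 : SConn (delV E z) a w := by
        by_cases haw : a = w
        · subst haw; exact sconn_refl _ _
        · exact (B1.2.1 ha hwB1 haw).2 z hza hzw
      have leg2 : SConn (delV E z) w b := by
        by_cases hbw : b = w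
        · subst hbw; exact sconn_refl _ _
        · exact (B2.2.1 hwB2 hb (Ne.symm hbw)).2 z hzw hzb
      exact sconn_trans leg1 leg2
  have hpair : (B1.1 ∪ B2.1).Pairwise (VRes E) := by
    intro a ha b hb hab
    rcases ha with ha | ha <;> rcases hb with hb | hb
    · exact B1.2.1 ha hb hab
    · exact cross a ha b hb hab
    · obtain ⟨hne, hc⟩ := cross b hb a ha (Ne.symm hab)
      exact ⟨hab, fun z hza hzb => sconn_symm (hc z hzb hza)⟩
    · exact B2.2.1 ha hb hab
  have he1 : B1.1 ∪ B2.1 = B1.1 := B1.2.2.2 _ Set.subset_union_left hpair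
  have he2 : B1.1 ∪ B2.1 = B2.1 := B2.2.2.2 _ Set.subset_union_right hpair
  have hBB : B1 = B2 := Subtype.ext (he1.symm.trans he2)
  have hnd : P.support.Nodup := hP.support_nodup
  rw [← P.take_spec hw, SimpleGraph.Walk.support_append] at hnd
  have hdisj := List.disjoint_of_nodup_append hnd
  have hm1 : Sum.inr B1 ∈ (P.takeUntil (Sum.inl w) hw).support := by
    have h' := List.mem_of_mem_tail hmem1
    rwa [SimpleGraph.Walk.support_reverse, List.mem_reverse] at h'
  exact hdisj hm1 (hBB.symm ▸ hmem2)
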